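/- Let 0 < ν < ∞ and define f(x) = e^{1/|x|^ν} for x ≠ 0. Then there exists C > 0 such that for all n ∈ ℕ and all x ≠ 0, |f^{(n)}(x)| ≤ C^n · e^{2/|x|^ν} · (n!)^{1+1/ν}. -/

import Mathlib

open Real

noncomputable section

namespace EIB
open Finset Topology

noncomputable def c (ν : ℝ) : ℕ → ℕ → ℝ
  | 0, 0 => 1
  | 0, _+1 => 0
  | n+1, 0 => -(n : ℝ) * c ν n 0
  | n+1, k+1 => -ν * c ν n k + (-(ν * (k+1) + n)) * c ν n (k+1)

lemma c_succ (ν : ℝ) (n k : ℕ) :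
    c ν (n+1) k = (if k = 0 then 0 else -ν * c ν n (k-1)) + (-(ν * k + n)) * c ν n k := by
  cases k with
  | zero => simp [c]
  | succ k => simp only [c, Nat.succ_sub_one, if_neg (Nat.succ_ne_zero k)]; push_cast; ring

lemma c_eq_zero (ν : ℝ) : ∀ n k, n < k → c ν n k = 0 := by
  intro n
  induction n with
  | zero => intro k hk; match k, hk with | (k+1), _ => rfl
  | succ n ih =>
      intro k hk
      match k, hk with
      | (k+1), hk =>
        have h1 : c ν n k = 0 := ih k (by omega)
        have h2 : c ν n (k+1) = 0 := ih (k+1) (by omega)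
        simp [c, h1, h2]

lemma sum_bound (ν : ℝ) (hν : 0 < ν) : ∀ n : ℕ,
    ∑ k ∈ range (n+1), |c ν n k| * k.factorial * 2^k ≤ (3*ν+1)^n * n.factorial := by
  intro n
  induction n with
  | zero => simp [c]
  | succ n ih =>
    have hS0 : (0:ℝ) ≤ ∑ k ∈ range (n+1), |c ν n k| * k.factorial * 2^k :=
      sum_nonneg fun k _ => by positivity
    have habs : ∀ k, |c ν (n+1) k| ≤
        (if k = 0 then 0 else ν * |c ν n (k-1)|) + (ν*k+n) * |c ν n k| := by
      intro k
      rw [c_succ]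
      refine (abs_add_le _ _).trans (add_le_add ?_ ?_)
      · split
        · simp
        · rw [abs_mul, abs_neg, abs_of_pos hν]
      · rw [abs_mul, abs_neg, abs_of_nonneg (by positivity)]
    calc ∑ k ∈ range (n+2), |c ν (n+1) k| * k.factorial * 2^k
        ≤ ∑ k ∈ range (n+2),
            ((if k = 0 then 0 else ν * |c ν n (k-1)|) + (ν*k+n) * |c ν n k|)
              * k.factorial * 2^k := by
          refine sum_le_sum fun k _ => ?_
          exact mul_le_mul_of_nonneg_right
            (mul_le_mul_of_nonneg_right (habs k) (by positivity)) (by positivity)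
      _ = (∑ k ∈ range (n+2),
            (if k = 0 then 0 else ν * |c ν n (k-1)|) * k.factorial * 2^k)
          + ∑ k ∈ range (n+2), (ν*k+n) * |c ν n k| * k.factorial * 2^k := by
          rw [← sum_add_distrib]; congr 1; funext k; ring
      _ ≤ (2*ν*(n+1)) * (∑ k ∈ range (n+1), |c ν n k| * k.factorial * 2^k)
          + ((ν+1)*(n+1)) * (∑ k ∈ range (n+1), |c ν n k| * k.factorial * 2^k) := by
          refine add_le_add ?_ ?_
          · rw [sum_range_succ']
            have step : ∀ j ∈ range (n+1),
                (if j+1 = 0 then 0 else ν * |c ν n (j+1-1)|) * ((j+1).factorial) * 2^(j+1)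
                  = (2*ν*((j:ℝ)+1)) * (|c ν n j| * j.factorial * 2^j) := by
              intro j _
              rw [if_neg (Nat.succ_ne_zero j), Nat.succ_sub_one, Nat.factorial_succ]
              push_cast; ring
            rw [sum_congr rfl step]
            simp only [reduceIte, zero_mul, add_zero, mul_sum]
            refine sum_le_sum fun j hj => ?_
            have hj' : (j:ℝ) + 1 ≤ (n:ℝ) + 1 := by
              have := mem_range.mp hj
              have : (j:ℝ) ≤ n := by exact_mod_cast Nat.lt_succ_iff.mp this
              linarith
            have h1 : (0:ℝ) ≤ |c ν n j| * j.factorial * 2^j := by positivity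
            refine mul_le_mul_of_nonneg_right ?_ h1
            nlinarith [hν.le]
          · rw [sum_range_succ, c_eq_zero ν n (n+1) (by omega)]
            simp only [abs_zero, mul_zero, zero_mul, add_zero, mul_sum]
            refine sum_le_sum fun k hk => ?_
            have hk' : (k:ℝ) ≤ n := by exact_mod_cast Nat.lt_succ_iff.mp (mem_range.mp hk)
            have h1 : (0:ℝ) ≤ |c ν n k| * k.factorial * 2^k := by positivity
            have h2 : ν*k + n ≤ (ν+1)*(n+1) := by nlinarith [hν.le, Nat.cast_nonneg k (α := ℝ)]
            nlinarith
      _ = ((3*ν+1)*(n+1)) * (∑ k ∈ range (n+1), |c ν n k| * k.factorial * 2^k) := by ring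
      _ ≤ ((3*ν+1)*(n+1)) * ((3*ν+1)^n * n.factorial) := by
          refine mul_le_mul_of_nonneg_left ih (by positivity)
      _ = (3*ν+1)^(n+1) * (n+1).factorial := by
          rw [Nat.factorial_succ]; push_cast; ring


lemma fact_lb : ∀ n : ℕ, ((n:ℝ)/3)^n ≤ n.factorial := by
  intro n
  induction n with
  | zero => simp
  | succ n ih =>
    have key : (((n:ℝ)+1)/3)^n ≤ 3 * ((n:ℝ)/3)^n := by
      rcases Nat.eq_zero_or_pos n with h | h
      · subst h; norm_num
      · have hn : (0:ℝ) < n := by exact_mod_cast h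
        have h1 : ((n:ℝ)+1)/3 = ((n:ℝ)/3) * (1 + 1/n) := by field_simp
        rw [h1, mul_pow]
        have h2 : (1 + 1/(n:ℝ))^n ≤ 3 := by
          have : (1 + 1/(n:ℝ))^n ≤ Real.exp (1/n) ^ n := by
            refine pow_le_pow_left₀ (by positivity) ?_ n
            linarith [Real.add_one_le_exp (1/(n:ℝ))]
          refine this.trans ?_
          rw [← Real.exp_nat_mul]
          have : (n:ℝ) * (1/n) = 1 := by field_simp
          rw [this]
          linarith [Real.exp_one_lt_d9]
        have h3 : (0:ℝ) ≤ ((n:ℝ)/3)^n := by positivity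
        nlinarith
    have hcast : ((n+1).factorial : ℝ) = ((n:ℝ)+1) * n.factorial := by
      rw [Nat.factorial_succ]; push_cast; ring
    have : (((n:ℝ)+1)/3)^(n+1) = (((n:ℝ)+1)/3) * (((n:ℝ)+1)/3)^n := by ring
    push_cast
    rw [this, hcast]
    have h4 : (0:ℝ) ≤ ((n:ℝ)+1)/3 := by positivity
    nlinarith [pow_nonneg (show (0:ℝ) ≤ ((n:ℝ)+1)/3 by positivity) n, ih,
      pow_nonneg (show (0:ℝ) ≤ (n:ℝ)/3 by positivity) n]

lemma pow_le_exp_half (k : ℕ) {s : ℝ} (hs : 0 ≤ s) :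
    s^k ≤ 2^k * k.factorial * Real.exp (s/2) := by
  have h1 : (s/2)^k / k.factorial ≤ Real.exp (s/2) := by
    calc (s/2)^k / k.factorial
        ≤ ∑ i ∈ range (k+1), (s/2)^i / i.factorial := by
          refine single_le_sum (f := fun i => (s/2)^i / (i.factorial:ℝ))
            (fun i _ => by positivity) (self_mem_range_succ k)
      _ ≤ Real.exp (s/2) := Real.sum_le_exp_of_nonneg (by positivity) _
  have h2 : s^k = 2^k * (s/2)^k := by rw [div_pow]; field_simp
  rw [h2]
  have hf : (0:ℝ) < k.factorial := by exact_mod_cast k.factorial_pos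
  calc (2:ℝ)^k * (s/2)^k ≤ 2^k * (k.factorial * Real.exp (s/2)) := by
        refine mul_le_mul_of_nonneg_left ?_ (by positivity)
        rw [div_le_iff₀ hf] at h1; linarith [h1]
    _ = 2^k * k.factorial * Real.exp (s/2) := by ring

lemma rpow_le_exp_half {a s : ℝ} (ha : 0 < a) (hs : 0 ≤ s) :
    s ^ a ≤ (2*a/Real.exp 1) ^ a * Real.exp (s/2) := by
  rcases eq_or_lt_of_le hs with h | h
  · rw [← h, Real.zero_rpow ha.ne']
    positivity
  · have hb : (0:ℝ) < 2*a/Real.exp 1 := by positivity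
    rw [Real.rpow_def_of_pos h, Real.rpow_def_of_pos hb, ← Real.exp_add]
    refine Real.exp_le_exp.mpr ?_
    have hlog : Real.log (s / (2*a)) ≤ s/(2*a) - 1 :=
      Real.log_le_sub_one_of_pos (by positivity)
    rw [Real.log_div h.ne' (by positivity : (2*a) ≠ 0)] at hlog
    have h2 : Real.log (2*a/Real.exp 1) = Real.log (2*a) - 1 := by
      rw [Real.log_div (by positivity) (Real.exp_ne_zero 1), Real.log_exp]
    rw [h2]
    have h3 : a * (Real.log s - Real.log (2*a)) ≤ a * (s/(2*a) - 1) :=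
      mul_le_mul_of_nonneg_left hlog ha.le
    have h4 : a * (s/(2*a)) = s/2 := by field_simp
    nlinarith [h3]


lemma formula (ν : ℝ) (hν : 0 < ν) : ∀ (n : ℕ) (x : ℝ), 0 < x →
    iteratedDeriv n (fun y : ℝ => Real.exp (1 / |y| ^ ν)) x
      = Real.exp (x ^ (-ν)) * ∑ k ∈ range (n+1), c ν n k * x ^ (-(ν*k + n)) := by
  intro n
  induction n with
  | zero =>
    intro x hx
    rw [iteratedDeriv_zero]
    have h1 : |x| = x := abs_of_pos hx
    have h2 : (1:ℝ) / x ^ ν = x ^ (-ν) := by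
      rw [Real.rpow_neg hx.le, one_div]
    simp only [h1, h2]
    norm_num [c]
  | succ n ih =>
    intro x hx
    rw [iteratedDeriv_succ]
    have hev : iteratedDeriv n (fun y : ℝ => Real.exp (1 / |y| ^ ν)) =ᶠ[𝓝 x]
        fun y => Real.exp (y ^ (-ν)) * ∑ k ∈ range (n+1), c ν n k * y ^ (-(ν*k + n)) :=
      Filter.eventuallyEq_of_mem (Ioi_mem_nhds hx) (fun y hy => ih y hy)
    rw [hev.deriv_eq]
    have hrpow : ∀ (p:ℝ), HasDerivAt (fun y:ℝ => y ^ p) (p * x ^ (p-1)) x :=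
      fun p => Real.hasDerivAt_rpow_const (Or.inl hx.ne')
    have h1 : HasDerivAt (fun y => Real.exp (y ^ (-ν)))
        (Real.exp (x^(-ν)) * ((-ν) * x ^ (-ν-1))) x := (hrpow (-ν)).exp
    have h2 : HasDerivAt (fun y => ∑ k ∈ range (n+1), c ν n k * y ^ (-(ν*k+n)))
        (∑ k ∈ range (n+1), c ν n k * ((-(ν*k+n)) * x ^ (-(ν*k+n)-1))) x :=
      HasDerivAt.fun_sum (fun k _ => (hrpow _).const_mul _)
    rw [(h1.fun_mul h2).deriv]
    -- now pure algebra
    have key : ∑ k ∈ range (n+2), c ν (n+1) k * x ^ (-(ν*k + ((n:ℝ)+1)))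
        = (-ν * x ^ (-ν-1)) * (∑ k ∈ range (n+1), c ν n k * x ^ (-(ν*k + n)))
          + ∑ k ∈ range (n+1), c ν n k * ((-(ν*k+n)) * x ^ (-(ν*k+n)-1)) := by
      have split : ∀ k ∈ range (n+2), c ν (n+1) k * x ^ (-(ν*k + ((n:ℝ)+1)))
          = (if k = 0 then 0 else -ν * c ν n (k-1)) * x ^ (-(ν*k + ((n:ℝ)+1)))
            + (-(ν*k + n)) * c ν n k * x ^ (-(ν*k + ((n:ℝ)+1))) := by
        intro k _; rw [c_succ]; ring
      rw [sum_congr rfl split, sum_add_distrib]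
      congr 1
      · rw [sum_range_succ']
        have hzero : (if (0:ℕ) = 0 then (0:ℝ) else -ν * c ν n (0-1)) *
            x ^ (-(ν*(0:ℕ) + ((n:ℝ)+1))) = 0 := by simp
        rw [hzero, add_zero, mul_sum]
        refine sum_congr rfl fun j _ => ?_
        rw [if_neg (Nat.succ_ne_zero j), Nat.succ_sub_one]
        have hexp : -(ν*((j:ℕ)+1:ℕ) + ((n:ℝ)+1)) = (-ν-1) + (-(ν*j + n)) := by
          push_cast; ring
        rw [hexp, Real.rpow_add hx]
        ring
      · rw [sum_range_succ, c_eq_zero ν n (n+1) (by omega), mul_zero, zero_mul, add_zero]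
        refine sum_congr rfl fun k _ => ?_
        have hexp : -(ν*k + ((n:ℝ)+1)) = -(ν*k + n) - 1 := by ring
        rw [hexp]; ring
    push_cast
    rw [key]
    ring


end EIB

open EIB Finset Topology in
/-- **Corollary 2.5**: for `0 < ν < ∞` and `f(x) = e^{1/|x|^ν}` (for `x ≠ 0`), there is
`C > 0` such that `|f^{(n)}(x)| ≤ Cⁿ e^{2/|x|^ν} (n!)^{1+1/ν}` for all `n ∈ ℕ`, `x ≠ 0`. -/
theorem expInvAbsRpow_deriv_bound (ν : ℝ) (hν : 0 < ν) :
    ∃ C > (0 : ℝ), ∀ n : ℕ, ∀ x : ℝ, x ≠ 0 →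
      |iteratedDeriv n (fun y : ℝ => Real.exp (1 / |y| ^ ν)) x| ≤
        C ^ n * Real.exp (2 / |x| ^ ν) * ((n.factorial : ℝ)) ^ (1 + 1 / ν) := by
  classical
  set C₂ : ℝ := max 1 ((6/(ν*Real.exp 1)) ^ (1/ν)) with hC₂def
  have hC₂ : (1:ℝ) ≤ C₂ := le_max_left _ _
  have hC₂pos : (0:ℝ) < C₂ := lt_of_lt_of_le one_pos hC₂
  set C : ℝ := (3*ν+1) * C₂ with hCdef
  have hCpos : 0 < C := by positivity
  refine ⟨C, hCpos, ?_⟩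
  intro n x hx
  -- case n = 0
  rcases Nat.eq_zero_or_pos n with hn | hn
  · subst hn
    rw [iteratedDeriv_zero, pow_zero, one_mul]
    have habs : (0:ℝ) < |x| ^ ν := Real.rpow_pos_of_pos (abs_pos.mpr hx) ν
    have h1 : (1:ℝ) / |x| ^ ν ≤ 2 / |x| ^ ν := by
      rw [div_le_div_iff₀ habs habs]; nlinarith [habs]
    calc |Real.exp (1 / |x| ^ ν)| = Real.exp (1 / |x| ^ ν) := abs_of_pos (Real.exp_pos _)
      _ ≤ Real.exp (2 / |x| ^ ν) := Real.exp_le_exp.mpr h1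
      _ = Real.exp (2 / |x| ^ ν) * ((Nat.factorial 0 : ℝ)) ^ (1 + 1/ν) := by
          simp [Real.one_rpow]
  -- main estimate for positive x
  have main : ∀ y : ℝ, 0 < y →
      |iteratedDeriv n (fun y : ℝ => Real.exp (1 / |y| ^ ν)) y| ≤
        C ^ n * Real.exp (2 / |y| ^ ν) * ((n.factorial : ℝ)) ^ (1 + 1 / ν) := by
    intro y hy
    set s : ℝ := y ^ (-ν) with hsdef
    have hs : 0 < s := Real.rpow_pos_of_pos hy _
    have hterm : ∀ k : ℕ, y ^ (-(ν*(k:ℝ) + (n:ℝ))) = s^k * s^((n:ℝ)/ν) := by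
      intro k
      have e1 : y ^ (-(ν*(k:ℝ) + (n:ℝ))) = y ^ ((-ν)*(k:ℝ)) * y ^ ((-ν)*((n:ℝ)/ν)) := by
        rw [← Real.rpow_add hy]
        congr 1
        field_simp
        ring
      rw [e1, Real.rpow_mul hy.le, Real.rpow_mul hy.le, Real.rpow_natCast]
    have hE : (0:ℝ) < 2*((n:ℝ)/ν)/Real.exp 1 := by
      have hn' : (0:ℝ) < n := by exact_mod_cast hn
      positivity
    set E : ℝ := (2*((n:ℝ)/ν)/Real.exp 1) ^ ((n:ℝ)/ν) with hEdef
    have hEpos : 0 < E := Real.rpow_pos_of_pos hE _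
    -- E ≤ C₂^n * (n!)^(1/ν)
    have hEbound : E ≤ C₂^n * ((n.factorial:ℝ)) ^ (1/ν) := by
      have hn' : (0:ℝ) < n := by exact_mod_cast hn
      have hb : 2*((n:ℝ)/ν)/Real.exp 1 = (6/(ν*Real.exp 1)) * ((n:ℝ)/3) := by
        field_simp; ring
      have h6 : (0:ℝ) < 6/(ν*Real.exp 1) := by positivity
      have e2 : E = ((6/(ν*Real.exp 1)) ^ (1/ν))^n * (((n:ℝ)/3) ^ (1/ν))^n := by
        rw [hEdef, hb, Real.mul_rpow h6.le (by positivity)]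
        congr 1
        · rw [show (n:ℝ)/ν = (1/ν) * (n:ℝ) by ring, Real.rpow_mul h6.le, Real.rpow_natCast]
        · rw [show (n:ℝ)/ν = (1/ν) * (n:ℝ) by ring,
            Real.rpow_mul (by positivity : (0:ℝ) ≤ (n:ℝ)/3), Real.rpow_natCast]
      rw [e2]
      have h3 : (((n:ℝ)/3) ^ (1/ν))^n = (((n:ℝ)/3)^n) ^ (1/ν) := by
        rw [← Real.rpow_natCast (((n:ℝ)/3) ^ (1/ν)) n, ← Real.rpow_mul (by positivity),
          show (1/ν) * (n:ℝ) = (n:ℝ) * (1/ν) by ring, Real.rpow_mul (by positivity),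
          Real.rpow_natCast]
      rw [h3]
      have h4 : (((n:ℝ)/3)^n) ^ (1/ν) ≤ ((n.factorial:ℝ)) ^ (1/ν) :=
        Real.rpow_le_rpow (by positivity) (fact_lb n) (by positivity)
      have h5 : ((6/(ν*Real.exp 1)) ^ (1/ν))^n ≤ C₂^n :=
        pow_le_pow_left₀ (Real.rpow_nonneg h6.le _) (le_max_right _ _) n
      exact mul_le_mul h5 h4 (by positivity) (by positivity)
    rw [formula ν hν n y hy]
    rw [abs_mul, abs_of_pos (Real.exp_pos _)]
    have habs2 : |∑ k ∈ range (n+1), c ν n k * y ^ (-(ν*k + n))|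
        ≤ ∑ k ∈ range (n+1), |c ν n k| * (s^k * s^((n:ℝ)/ν)) := by
      refine (abs_sum_le_sum_abs _ _).trans ?_
      refine sum_le_sum fun k _ => le_of_eq ?_
      rw [abs_mul]
      congr 1
      rw [hterm k]
      exact abs_of_pos (mul_pos (pow_pos hs k) (Real.rpow_pos_of_pos hs _))
    have hsum : ∑ k ∈ range (n+1), |c ν n k| * (s^k * s^((n:ℝ)/ν))
        ≤ (Real.exp s * E) * ((3*ν+1)^n * n.factorial) := by
      calc ∑ k ∈ range (n+1), |c ν n k| * (s^k * s^((n:ℝ)/ν))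
          ≤ ∑ k ∈ range (n+1), |c ν n k| * ((2^k * k.factorial * Real.exp (s/2))
              * (E * Real.exp (s/2))) := by
            refine sum_le_sum fun k _ => ?_
            refine mul_le_mul_of_nonneg_left ?_ (abs_nonneg _)
            refine mul_le_mul (pow_le_exp_half k hs.le) ?_ (by positivity) (by positivity)
            have := rpow_le_exp_half (by positivity : (0:ℝ) < (n:ℝ)/ν) hs.le
            calc s ^ ((n:ℝ)/ν) ≤ (2*((n:ℝ)/ν)/Real.exp 1) ^ ((n:ℝ)/ν) * Real.exp (s/2) := this
              _ = E * Real.exp (s/2) := by rw [hEdef]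
        _ = (Real.exp s * E) * ∑ k ∈ range (n+1), |c ν n k| * k.factorial * 2^k := by
            rw [mul_sum]
            refine sum_congr rfl fun k _ => ?_
            have hee : Real.exp (s/2) * Real.exp (s/2) = Real.exp s := by
              rw [← Real.exp_add]; congr 1; ring
            rw [← hee]
            ring
        _ ≤ (Real.exp s * E) * ((3*ν+1)^n * n.factorial) := by
            refine mul_le_mul_of_nonneg_left (sum_bound ν hν n) (by positivity)
    have hfinal : Real.exp s * (∑ k ∈ range (n+1), |c ν n k| * (s^k * s^((n:ℝ)/ν)))
        ≤ Real.exp (2*s) * E * ((3*ν+1)^n * n.factorial) := by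
      have := mul_le_mul_of_nonneg_left hsum (Real.exp_pos s).le
      calc Real.exp s * (∑ k ∈ range (n+1), |c ν n k| * (s^k * s^((n:ℝ)/ν)))
          ≤ Real.exp s * ((Real.exp s * E) * ((3*ν+1)^n * n.factorial)) := this
        _ = Real.exp (2*s) * E * ((3*ν+1)^n * n.factorial) := by
            rw [show (2:ℝ)*s = s + s by ring, Real.exp_add]; ring
    have habs3 : Real.exp s * |∑ k ∈ range (n+1), c ν n k * y ^ (-(ν*k + n))|
        ≤ Real.exp (2*s) * E * ((3*ν+1)^n * n.factorial) :=
      le_trans (mul_le_mul_of_nonneg_left habs2 (Real.exp_pos s).le) hfinal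
    refine habs3.trans ?_
    -- final comparison
    have hexp2 : Real.exp (2*s) = Real.exp (2 / |y| ^ ν) := by
      congr 1
      rw [abs_of_pos hy, hsdef, Real.rpow_neg hy.le]
      field_simp
    have hfact : (0:ℝ) < (n.factorial:ℝ) := by exact_mod_cast n.factorial_pos
    have hrpow1 : ((n.factorial:ℝ)) ^ (1 + 1/ν) = (n.factorial:ℝ) * ((n.factorial:ℝ)) ^ (1/ν) := by
      rw [Real.rpow_add hfact, Real.rpow_one]
    calc Real.exp (2*s) * E * ((3*ν+1)^n * n.factorial)
        ≤ Real.exp (2*s) * (C₂^n * ((n.factorial:ℝ)) ^ (1/ν)) * ((3*ν+1)^n * n.factorial) := by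
          refine mul_le_mul_of_nonneg_right (mul_le_mul_of_nonneg_left hEbound (Real.exp_pos _).le) ?_
          positivity
      _ = C ^ n * Real.exp (2*s) * ((n.factorial:ℝ)) ^ (1 + 1/ν) := by
          rw [hrpow1, hCdef, mul_pow]; ring
      _ = C ^ n * Real.exp (2 / |y| ^ ν) * ((n.factorial:ℝ)) ^ (1 + 1/ν) := by rw [hexp2]
  -- reduce general x to positive x
  rcases hx.lt_or_gt with hneg | hpos
  · have hnegf : (fun y : ℝ => Real.exp (1 / |(-y)| ^ ν)) = (fun y : ℝ => Real.exp (1 / |y| ^ ν)) :=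
      funext fun y => by rw [abs_neg]
    have hcomp := iteratedDeriv_comp_neg n (fun y : ℝ => Real.exp (1 / |y| ^ ν)) x
    rw [show (fun y : ℝ => Real.exp (1 / |(-y)| ^ ν)) = _ from hnegf] at hcomp
    rw [hcomp, smul_eq_mul, abs_mul, abs_pow, abs_neg, abs_one, one_pow, one_mul]
    have hres := main (-x) (by linarith)
    rwa [abs_neg] at hres
  · exact main x hpos


end
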